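/- Let d ∈ {1,2}. For each n ≥ 1 let Λ_n = ([−n,n] ∩ ℤ)^d, and let α_n, ρ_n : ℤ^d → ℝ be nonnegative functions. Assume: (i) for all n ≥ 1 and all x ∈ Λ_n, α_n(x) ≤ α_{n+1}(x); (ii) there is C > 0 with Σ_{x ∈ Λ_n} α_n(x) ≤ C Σ_{x ∈ Λ_n} ρ_n(x) √(α_n(x)) for all n ≥ 1; (iii) C₁ := sup_{x ∈ ℤ^d} Σ_{n=1}^{∞} ρ_n(x) < ∞; (iv) C₂ := sup_{n ≥ 1} n^{-(d−1)} Σ_{x ∈ Λ_n} ρ_n(x) < ∞. Then α_n(x) = 0 for every n ≥ 1 and every x ∈ Λ_n. -/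

import Mathlib

/-- The centred box `Λ_n = ([-n,n] ∩ ℤ)^d` in `ℤ^d`. -/
noncomputable def centredBox (d : ℕ) (n : ℕ) : Finset (Fin d → ℤ) :=
  Fintype.piFinset fun _ => Finset.Icc (-(n : ℤ)) (n : ℤ)

lemma centredBox_mono {d k n : ℕ} (h : k ≤ n) : centredBox d k ⊆ centredBox d n := by
  intro x hx
  simp only [centredBox, Fintype.mem_piFinset, Finset.mem_Icc] at hx ⊢
  intro i
  obtain ⟨h1, h2⟩ := hx i
  have : (k : ℤ) ≤ (n : ℤ) := by exact_mod_cast h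
  constructor <;> linarith

set_option maxHeartbeats 1000000 in
/-- The abstract quantitative argument of the Holley–Stroock principle in
dimensions `d ∈ {1,2}`: if the nonnegative quantities `α_n(x)` are monotone in
the volume, satisfy the Cauchy–Schwarz-type bound
`Σ_{x∈Λ_n} α_n(x) ≤ C Σ_{x∈Λ_n} ρ_n(x) √(α_n(x))`, and the nonnegative errors
`ρ_n(x)` satisfy `sup_x Σ_n ρ_n(x) ≤ C₁ < ∞` and
`Σ_{x∈Λ_n} ρ_n(x) ≤ C₂ n^{d−1}`, then `α_n(x) = 0` for all `n ≥ 1`, `x ∈ Λ_n`. -/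
theorem holley_stroock_quantitative (d : ℕ) (hd : d = 1 ∨ d = 2)
    (α ρ : ℕ → (Fin d → ℤ) → ℝ)
    (hα : ∀ n x, 0 ≤ α n x) (hρ : ∀ n x, 0 ≤ ρ n x)
    (hmono : ∀ n, 1 ≤ n → ∀ x ∈ centredBox d n, α n x ≤ α (n + 1) x)
    (C : ℝ) (hC : 0 < C)
    (hCS : ∀ n, 1 ≤ n →
      ∑ x ∈ centredBox d n, α n x ≤
        C * ∑ x ∈ centredBox d n, ρ n x * Real.sqrt (α n x))
    (hsum : ∀ x, Summable fun n => ρ (n + 1) x)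
    (C₁ : ℝ) (hC₁ : ∀ x, ∑' n : ℕ, ρ (n + 1) x ≤ C₁)
    (C₂ : ℝ) (hC₂ : ∀ n, 1 ≤ n →
      ∑ x ∈ centredBox d n, ρ n x ≤ C₂ * (n : ℝ) ^ (d - 1)) :
    ∀ n, 1 ≤ n → ∀ x ∈ centredBox d n, α n x = 0 := by
  -- monotonicity of α across scales
  have hαm : ∀ k n : ℕ, 1 ≤ k → k ≤ n → ∀ x ∈ centredBox d k, α k x ≤ α n x := by
    intro k n hk hkn
    induction n, hkn using Nat.le_induction with
    | base => exact fun x _ => le_rfl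
    | succ n hkn ih =>
      intro x hx
      exact (ih x hx).trans (hmono n (hk.trans hkn) x (centredBox_mono hkn hx))
  set A : ℕ → ℝ := fun n => ∑ x ∈ centredBox d n, α n x with hAdef
  set R : ℕ → ℝ := fun n => ∑ x ∈ centredBox d n, ρ n x with hRdef
  set δ : ℕ → ℝ := fun n => ∑ x ∈ centredBox d n, ρ n x * α n x with hδdef
  set S : ℕ → ℝ := fun n => ∑ k ∈ Finset.range n, δ (k + 1) with hSdef
  have hA0 : ∀ n, 0 ≤ A n := fun n => Finset.sum_nonneg fun x _ => hα n x
  have hR0 : ∀ n, 0 ≤ R n := fun n => Finset.sum_nonneg fun x _ => hρ n x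
  have hδ0 : ∀ n, 0 ≤ δ n :=
    fun n => Finset.sum_nonneg fun x _ => mul_nonneg (hρ n x) (hα n x)
  have hS0 : ∀ n, 0 ≤ S n := fun n => Finset.sum_nonneg fun k _ => hδ0 (k + 1)
  have hSsucc : ∀ n, S (n + 1) = S n + δ (n + 1) := fun n => Finset.sum_range_succ _ n
  have hSm : Monotone S := by
    apply monotone_nat_of_le_succ
    intro n
    rw [hSsucc n]
    linarith [hδ0 (n + 1)]
  -- Cauchy–Schwarz: A n ^ 2 ≤ C^2 * (R n * δ n)
  have hCS2 : ∀ n, 1 ≤ n → A n ^ 2 ≤ C ^ 2 * (R n * δ n) := by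
    intro n hn
    set T : ℝ := ∑ x ∈ centredBox d n, ρ n x * Real.sqrt (α n x) with hTdef
    have hT0 : 0 ≤ T := Finset.sum_nonneg fun x _ =>
      mul_nonneg (hρ n x) (Real.sqrt_nonneg _)
    have hTsq : T ^ 2 ≤ R n * δ n := by
      have h := Finset.sum_mul_sq_le_sq_mul_sq (centredBox d n)
        (fun x => Real.sqrt (ρ n x)) (fun x => Real.sqrt (ρ n x) * Real.sqrt (α n x))
      have e1 : ∀ x ∈ centredBox d n,
          Real.sqrt (ρ n x) * (Real.sqrt (ρ n x) * Real.sqrt (α n x))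
            = ρ n x * Real.sqrt (α n x) := by
        intro x _
        rw [← mul_assoc, Real.mul_self_sqrt (hρ n x)]
      have e2 : ∀ x ∈ centredBox d n, Real.sqrt (ρ n x) ^ 2 = ρ n x := by
        intro x _; exact Real.sq_sqrt (hρ n x)
      have e3 : ∀ x ∈ centredBox d n,
          (Real.sqrt (ρ n x) * Real.sqrt (α n x)) ^ 2 = ρ n x * α n x := by
        intro x _
        rw [mul_pow, Real.sq_sqrt (hρ n x), Real.sq_sqrt (hα n x)]
      rw [Finset.sum_congr rfl e1, Finset.sum_congr rfl e2, Finset.sum_congr rfl e3] at h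
      exact h
    have hAT : A n ≤ C * T := hCS n hn
    calc A n ^ 2 ≤ (C * T) ^ 2 := by
          apply pow_le_pow_left₀ (hA0 n) hAT
      _ = C ^ 2 * T ^ 2 := by ring
      _ ≤ C ^ 2 * (R n * δ n) := by
          apply mul_le_mul_of_nonneg_left hTsq (by positivity)
  -- partial sums bound: S n ≤ C₁ * A n
  have hSA : ∀ n, 1 ≤ n → S n ≤ C₁ * A n := by
    intro n hn
    have step1 : ∀ k ∈ Finset.range n, δ (k + 1) ≤
        ∑ x ∈ centredBox d n, ρ (k + 1) x * α n x := by
      intro k hk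
      rw [Finset.mem_range] at hk
      have hk1 : k + 1 ≤ n := hk
      calc δ (k + 1) = ∑ x ∈ centredBox d (k + 1), ρ (k + 1) x * α (k + 1) x := rfl
        _ ≤ ∑ x ∈ centredBox d (k + 1), ρ (k + 1) x * α n x := by
            apply Finset.sum_le_sum
            intro x hx
            exact mul_le_mul_of_nonneg_left (hαm (k + 1) n le_add_self hk1 x hx) (hρ _ x)
        _ ≤ ∑ x ∈ centredBox d n, ρ (k + 1) x * α n x := by
            apply Finset.sum_le_sum_of_subset_of_nonneg (centredBox_mono hk1)
            intro x _ _
            exact mul_nonneg (hρ _ x) (hα _ x)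
    calc S n ≤ ∑ k ∈ Finset.range n, ∑ x ∈ centredBox d n, ρ (k + 1) x * α n x :=
          Finset.sum_le_sum step1
      _ = ∑ x ∈ centredBox d n, (∑ k ∈ Finset.range n, ρ (k + 1) x) * α n x := by
          rw [Finset.sum_comm]
          exact Finset.sum_congr rfl fun x _ => (Finset.sum_mul _ _ _).symm
      _ ≤ ∑ x ∈ centredBox d n, C₁ * α n x := by
          apply Finset.sum_le_sum
          intro x _
          apply mul_le_mul_of_nonneg_right _ (hα n x)
          exact le_trans (Summable.sum_le_tsum (Finset.range n) (fun i _ => hρ _ x) (hsum x)) (hC₁ x)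
      _ = C₁ * A n := by rw [← Finset.mul_sum]
  -- nonnegativity of the constants
  have hC₂0 : 0 ≤ C₂ := by
    have h1 := hC₂ 1 le_rfl
    have h2 := hR0 1
    rcases hd with rfl | rfl <;> simpa using le_trans h2 h1
  -- main contradiction
  by_contra hcon
  push_neg at hcon
  obtain ⟨n₀, hn₀, x₀, hx₀, hαx⟩ := hcon
  have hApos : 0 < A n₀ := by
    have h1 : 0 < α n₀ x₀ := (hα n₀ x₀).lt_of_ne (Ne.symm hαx)
    exact lt_of_lt_of_le h1 (Finset.single_le_sum (fun x _ => hα n₀ x) hx₀)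
  -- find a site with positive ρ and α
  have hTpos : (0:ℝ) < ∑ x ∈ centredBox d n₀, ρ n₀ x * Real.sqrt (α n₀ x) := by
    have h := hCS n₀ hn₀
    nlinarith
  obtain ⟨y, hy, hypos⟩ : ∃ y ∈ centredBox d n₀, 0 < ρ n₀ y * Real.sqrt (α n₀ y) := by
    by_contra h
    push_neg at h
    have : (∑ x ∈ centredBox d n₀, ρ n₀ x * Real.sqrt (α n₀ x)) ≤ 0 :=
      Finset.sum_nonpos h
    linarith
  have hρy : 0 < ρ n₀ y := by
    rcases (hρ n₀ y).lt_or_eq with h | h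
    · exact h
    · rw [← h, zero_mul] at hypos; exact absurd hypos (lt_irrefl 0)
  have hαy : 0 < α n₀ y := by
    have hs : 0 < Real.sqrt (α n₀ y) := by
      by_contra h
      push_neg at h
      nlinarith
    exact Real.sqrt_pos.mp hs
  have hδpos : 0 < δ n₀ :=
    lt_of_lt_of_le (mul_pos hρy hαy)
      (Finset.single_le_sum (fun x _ => mul_nonneg (hρ n₀ x) (hα n₀ x)) hy)
  have he : n₀ - 1 + 1 = n₀ := Nat.succ_pred_eq_of_pos hn₀
  have hSn₀pos : 0 < S n₀ := by
    have h := hSsucc (n₀ - 1)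
    rw [he] at h
    linarith [hS0 (n₀ - 1)]
  have hC₂pos : 0 < C₂ := by
    have h1 : ρ n₀ y ≤ R n₀ := Finset.single_le_sum (fun x _ => hρ n₀ x) hy
    have h2 := hC₂ n₀ hn₀
    have h3 : (0:ℝ) < (n₀ : ℝ) ^ (d - 1) := by
      apply pow_pos
      exact_mod_cast hn₀
    nlinarith
  have hC₁pos : 0 < C₁ := by
    have h1 : ρ (n₀ - 1 + 1) y ≤ ∑' n : ℕ, ρ (n + 1) y :=
      Summable.le_tsum (hsum y) (n₀ - 1) (fun i _ => hρ _ y)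
    rw [he] at h1
    linarith [hC₁ y]
  set L : ℝ := C₁ ^ 2 * C ^ 2 * C₂ with hLdef
  have hL : 0 < L := by positivity
  -- key recursion: S n ^ 2 ≤ L * n * δ n
  have hkey : ∀ n, 1 ≤ n → S n ^ 2 ≤ L * n * δ n := by
    intro n hn
    have h1 : S n ^ 2 ≤ C₁ ^ 2 * A n ^ 2 := by
      have := hSA n hn
      nlinarith [hS0 n, hA0 n, hC₁pos.le]
    have h2 : A n ^ 2 ≤ C ^ 2 * (R n * δ n) := hCS2 n hn
    have h3 : R n ≤ C₂ * (n : ℝ) ^ (d - 1) := hC₂ n hn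
    have hpow : (n : ℝ) ^ (d - 1) ≤ (n : ℝ) := by
      have hn' : (1:ℝ) ≤ (n:ℝ) := by exact_mod_cast hn
      rcases hd with rfl | rfl <;> simp <;> linarith
    have h4 : R n * δ n ≤ C₂ * (n : ℝ) * δ n := by
      have : R n ≤ C₂ * (n : ℝ) := le_trans h3 (by nlinarith)
      nlinarith [hδ0 n]
    calc S n ^ 2 ≤ C₁ ^ 2 * A n ^ 2 := h1
      _ ≤ C₁ ^ 2 * (C ^ 2 * (R n * δ n)) := by nlinarith [sq_nonneg C₁]
      _ ≤ C₁ ^ 2 * (C ^ 2 * (C₂ * (n : ℝ) * δ n)) := by nlinarith [sq_nonneg C₁, sq_nonneg C]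
      _ = L * n * δ n := by rw [hLdef]; ring
  -- telescoping estimate
  have hstep : ∀ N, n₀ ≤ N → 1 / (L * (N + 1)) ≤ 1 / S N - 1 / S (N + 1) := by
    intro N hN
    have ha : 0 < S N := lt_of_lt_of_le hSn₀pos (hSm hN)
    have hab : S N ≤ S (N + 1) := hSm (Nat.le_succ N)
    have hb : 0 < S (N + 1) := lt_of_lt_of_le ha hab
    have hδeq : δ (N + 1) = S (N + 1) - S N := by rw [hSsucc]; ring
    have hk := hkey (N + 1) (Nat.le_add_left 1 N)
    rw [hδeq] at hk
    push_cast at hk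
    have hNpos : (0:ℝ) < L * ((N:ℝ) + 1) := by positivity
    have hmain : S N * S (N + 1) ≤ L * ((N:ℝ) + 1) * (S (N + 1) - S N) := by
      have h5 := mul_le_mul_of_nonneg_right hab hb.le
      nlinarith [h5, hk]
    have heq : 1 / S N - 1 / S (N + 1) = (S (N + 1) - S N) / (S N * S (N + 1)) := by
      field_simp
    rw [heq, div_le_div_iff₀ hNpos (mul_pos ha hb)]
    nlinarith [hmain]
  have htel : ∀ N, n₀ ≤ N →
      (∑ k ∈ Finset.Ico n₀ N, 1 / (L * (k + 1 : ℝ))) ≤ 1 / S n₀ - 1 / S N := by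
    intro N hN
    induction N, hN using Nat.le_induction with
    | base => simp
    | succ N hN ih =>
      rw [Finset.sum_Ico_succ_top hN]
      have := hstep N hN
      push_cast
      push_cast at ih this
      linarith
  -- harmonic divergence gives the contradiction
  have hdiv := Real.tendsto_sum_range_one_div_nat_succ_atTop
  obtain ⟨N, hNbig, hNge⟩ :=
    ((hdiv.eventually (Filter.eventually_ge_atTop
      (L / S n₀ + 1 + ∑ k ∈ Finset.range n₀, (1 : ℝ) / (k + 1)))).and
      (Filter.eventually_ge_atTop n₀)).exists
  have hIco : (∑ k ∈ Finset.Ico n₀ N, (1:ℝ) / (k + 1)) =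
      (∑ k ∈ Finset.range N, (1:ℝ) / (k + 1)) -
        ∑ k ∈ Finset.range n₀, (1:ℝ) / (k + 1) := by
    rw [Finset.sum_Ico_eq_sub _ hNge]
  have hIcobig : L / S n₀ + 1 ≤ ∑ k ∈ Finset.Ico n₀ N, (1:ℝ) / (k + 1) := by
    rw [hIco]; linarith
  have hfactor : (∑ k ∈ Finset.Ico n₀ N, 1 / (L * (k + 1 : ℝ))) =
      (1 / L) * ∑ k ∈ Finset.Ico n₀ N, (1:ℝ) / (k + 1) := by
    rw [Finset.mul_sum]
    apply Finset.sum_congr rfl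
    intro k _
    rw [div_mul_div_comm, one_mul]
  have htelN := htel N hNge
  have hSNpos : 0 < S N := lt_of_lt_of_le hSn₀pos (hSm hNge)
  have h1 : (1 / L) * (L / S n₀ + 1) ≤ 1 / S n₀ - 1 / S N := by
    calc (1 / L) * (L / S n₀ + 1) ≤ (1 / L) * ∑ k ∈ Finset.Ico n₀ N, (1:ℝ) / (k + 1) :=
          mul_le_mul_of_nonneg_left hIcobig (one_div_pos.mpr hL).le
      _ = ∑ k ∈ Finset.Ico n₀ N, 1 / (L * (k + 1 : ℝ)) := hfactor.symm
      _ ≤ 1 / S n₀ - 1 / S N := htelN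
  have h2 : (1 / L) * (L / S n₀ + 1) = 1 / S n₀ + 1 / L := by
    field_simp
  rw [h2] at h1
  have h3 : (0:ℝ) < 1 / L := one_div_pos.mpr hL
  have h4 : (0:ℝ) < 1 / S N := one_div_pos.mpr hSNpos
  linarith
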